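/- Optimality of the Gibbs policy (second part of Proposition 3.3 and equation (3.4), kernel form): Let V_h be the unique bounded measurable fixed point of T*, and define π*_h(x,u) := exp( (r(x,u)h + γ ∫_𝒳 V_h(y) κ(x,u)(dy)) / (λh) ) / ∫_𝒰 exp( (r(x,u')h + γ ∫_𝒳 V_h(y) κ(x,u')(dy)) / (λh) ) μ(du'). Then π*_h is a (bounded measurable) policy, T^{π*_h} V_h = V_h, and hence V_h is the unique bounded measurable fixed point of T^{π*_h}, i.e. the Gibbs policy π*_h achieves the supremum in the regularized Bellman equation. -/

import Mathlib

open MeasureTheory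

/-- A (randomized feedback) policy: a bounded measurable nonnegative function
`π : 𝒳 × 𝒰 → ℝ` with `∫ π(x,·) dμ = 1` for every `x`. -/
def IsPolicy {𝒳 𝒰 : Type*} [MeasurableSpace 𝒳] [MeasurableSpace 𝒰]
    (μ : Measure 𝒰) (π : 𝒳 × 𝒰 → ℝ) : Prop :=
  Measurable π ∧ (∃ C : ℝ, ∀ p, π p ≤ C) ∧ (∀ p, 0 ≤ π p) ∧
    ∀ x, ∫ u, π (x, u) ∂μ = 1

/-- The policy Bellman operator
`(T^π W)(x) = ∫ [r(x,u)h − λh·ln π(x,u) + γ ∫ W dκ(x,u)] π(x,u) μ(du)`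
(with the convention `0·ln 0 = 0`, automatic since `Real.log 0 = 0`). -/
noncomputable def Tpol {𝒳 𝒰 : Type*} [MeasurableSpace 𝒳] [MeasurableSpace 𝒰]
    (μ : Measure 𝒰) (κ : ProbabilityTheory.Kernel (𝒳 × 𝒰) 𝒳) (r : 𝒳 × 𝒰 → ℝ)
    (h lam γ : ℝ) (π : 𝒳 × 𝒰 → ℝ) (W : 𝒳 → ℝ) : 𝒳 → ℝ :=
  fun x => ∫ u,
    (r (x, u) * h - lam * h * Real.log (π (x, u)) + γ * ∫ y, W y ∂(κ (x, u)))
      * π (x, u) ∂μ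

/-- The discrete-time entropy-regularized Bellman operator
`(T*W)(x) = λh · ln ∫ exp((r(x,u)h + γ ∫ W dκ(x,u)) / (λh)) μ(du)`. -/
noncomputable def Tstar {𝒳 𝒰 : Type*} [MeasurableSpace 𝒳] [MeasurableSpace 𝒰]
    (μ : Measure 𝒰) (κ : ProbabilityTheory.Kernel (𝒳 × 𝒰) 𝒳) (r : 𝒳 × 𝒰 → ℝ)
    (h lam γ : ℝ) (W : 𝒳 → ℝ) : 𝒳 → ℝ :=
  fun x => lam * h *
    Real.log (∫ u, Real.exp ((r (x, u) * h + γ * ∫ y, W y ∂(κ (x, u))) / (lam * h)) ∂μ)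

/-- Gibbs exponent. -/
noncomputable def gibbsGE {𝒳 𝒰 : Type*} [MeasurableSpace 𝒳] [MeasurableSpace 𝒰]
    (κ : ProbabilityTheory.Kernel (𝒳 × 𝒰) 𝒳) (r : 𝒳 × 𝒰 → ℝ)
    (h lam γ : ℝ) (W : 𝒳 → ℝ) : 𝒳 × 𝒰 → ℝ :=
  fun p => (r p * h + γ * ∫ y, W y ∂(κ p)) / (lam * h)

/-- Gibbs partition function. -/
noncomputable def gibbsZ {𝒳 𝒰 : Type*} [MeasurableSpace 𝒳] [MeasurableSpace 𝒰]
    (μ : Measure 𝒰) (κ : ProbabilityTheory.Kernel (𝒳 × 𝒰) 𝒳) (r : 𝒳 × 𝒰 → ℝ)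
    (h lam γ : ℝ) (W : 𝒳 → ℝ) : 𝒳 → ℝ :=
  fun x => ∫ u, Real.exp (gibbsGE κ r h lam γ W (x, u)) ∂μ

lemma integrable_of_bdd' {α : Type*} [MeasurableSpace α] {μ : Measure α} [IsFiniteMeasure μ]
    {f : α → ℝ} (hf : Measurable f) (C : ℝ) (hC : ∀ x, |f x| ≤ C) : Integrable f μ :=
  Integrable.mono' (integrable_const C) hf.aestronglyMeasurable
    (ae_of_all _ fun x => by simpa using hC x)

lemma abs_integral_le_of_prob {α : Type*} [MeasurableSpace α] (ν : Measure α)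
    [IsProbabilityMeasure ν] {f : α → ℝ} {C : ℝ} (h : ∀ x, |f x| ≤ C) :
    |∫ x, f x ∂ν| ≤ C := by
  have := norm_integral_le_of_norm_le_const (μ := ν) (f := f) (C := C)
    (ae_of_all _ fun x => by simpa using h x)
  simpa [Real.norm_eq_abs] using this

theorem gibbs_policy_optimal
    {𝒳 𝒰 : Type*} [MeasurableSpace 𝒳] [MeasurableSpace 𝒰]
    (μ : Measure 𝒰) [IsFiniteMeasure μ] (hμpos : 0 < μ Set.univ)
    (κ : ProbabilityTheory.Kernel (𝒳 × 𝒰) 𝒳) [ProbabilityTheory.IsMarkovKernel κ]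
    (r : 𝒳 × 𝒰 → ℝ) (hrmeas : Measurable r) (hrbdd : ∃ C : ℝ, ∀ p, |r p| ≤ C)
    (h lam γ : ℝ) (hh : 0 < h) (hlam : 0 < lam) (hγ : γ ∈ Set.Ioo (0 : ℝ) 1)
    (Vh : 𝒳 → ℝ) (hVhmeas : Measurable Vh) (hVhbdd : ∃ C : ℝ, ∀ x, |Vh x| ≤ C)
    (hVhfix : Tstar μ κ r h lam γ Vh = Vh)
    (πstar : 𝒳 × 𝒰 → ℝ)
    (hπstar : πstar = fun p =>
      Real.exp ((r p * h + γ * ∫ y, Vh y ∂(κ p)) / (lam * h)) /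
        ∫ u', Real.exp ((r (p.1, u') * h + γ * ∫ y, Vh y ∂(κ (p.1, u'))) / (lam * h)) ∂μ) :
    IsPolicy μ πstar ∧
    Tpol μ κ r h lam γ πstar Vh = Vh ∧
    ∀ W : 𝒳 → ℝ, Measurable W → (∃ C : ℝ, ∀ x, |W x| ≤ C) →
      Tpol μ κ r h lam γ πstar W = W → W = Vh := by
  obtain ⟨Cr₀, hCr₀⟩ := hrbdd
  obtain ⟨CV₀, hCV₀⟩ := hVhbdd
  set Cr : ℝ := max Cr₀ 0 with hCrdef
  set CV : ℝ := max CV₀ 0 with hCVdef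
  have hCr : ∀ p, |r p| ≤ Cr := fun p => (hCr₀ p).trans (le_max_left _ _)
  have hCV : ∀ x, |Vh x| ≤ CV := fun x => (hCV₀ x).trans (le_max_left _ _)
  have hCrnn : 0 ≤ Cr := le_max_right _ _
  have hCVnn : 0 ≤ CV := le_max_right _ _
  have hlh : (0:ℝ) < lam * h := mul_pos hlam hh
  obtain ⟨hγ0, hγ1⟩ := hγ
  -- notation
  set gE : 𝒳 × 𝒰 → ℝ := gibbsGE κ r h lam γ Vh with hgEdef
  set Z : 𝒳 → ℝ := gibbsZ μ κ r h lam γ Vh with hZdef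
  have hπ : πstar = fun p => Real.exp (gE p) / Z p.1 := by
    rw [hπstar]; rfl
  -- measurability of kernel integrals
  have hIVmeas : Measurable fun p : 𝒳 × 𝒰 => ∫ y, Vh y ∂(κ p) :=
    ((hVhmeas.stronglyMeasurable.comp_measurable measurable_snd).integral_kernel_prod_right').measurable
  have hIVbdd : ∀ p : 𝒳 × 𝒰, |∫ y, Vh y ∂(κ p)| ≤ CV := fun p =>
    abs_integral_le_of_prob (κ p) hCV
  have hgEmeas : Measurable gE := by
    rw [hgEdef]
    exact ((hrmeas.mul_const h).add (measurable_const.mul hIVmeas)).div_const _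
  set M : ℝ := (Cr * h + CV) / (lam * h) with hMdef
  have hMnn : 0 ≤ M := div_nonneg (by positivity) hlh.le
  have hgEbdd : ∀ p, |gE p| ≤ M := by
    intro p
    rw [hgEdef, hMdef]
    unfold gibbsGE
    rw [abs_div, abs_of_pos hlh]
    gcongr
    calc |r p * h + γ * ∫ y, Vh y ∂(κ p)|
        ≤ |r p * h| + |γ * ∫ y, Vh y ∂(κ p)| := abs_add_le _ _
      _ ≤ Cr * h + CV := by
          gcongr
          · rw [abs_mul, abs_of_pos hh]
            exact mul_le_mul_of_nonneg_right (hCr p) hh.le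
          · rw [abs_mul, abs_of_pos hγ0]
            calc γ * |∫ y, Vh y ∂(κ p)| ≤ 1 * CV :=
                  mul_le_mul hγ1.le (hIVbdd p) (abs_nonneg _) zero_le_one
              _ = CV := one_mul _
  set c : ℝ := (μ Set.univ).toReal with hcdef
  have hc : 0 < c := ENNReal.toReal_pos hμpos.ne' (measure_ne_top μ _)
  -- integrability of exp ∘ gE slices
  have hexple : ∀ p, Real.exp (gE p) ≤ Real.exp M := fun p =>
    Real.exp_le_exp.mpr ((abs_le.1 (hgEbdd p)).2)
  have hexpge : ∀ p, Real.exp (-M) ≤ Real.exp (gE p) := fun p =>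
    Real.exp_le_exp.mpr (neg_le_of_abs_le (hgEbdd p) |>.trans_eq rfl) |>.trans_eq rfl
  have hintexp : ∀ x, Integrable (fun u => Real.exp (gE (x, u))) μ := fun x =>
    integrable_of_bdd' (Real.measurable_exp.comp (hgEmeas.comp measurable_prodMk_left))
      (Real.exp M) (fun u => by
        rw [abs_of_pos (Real.exp_pos _)]; exact hexple (x, u))
  have hZeq : ∀ x, Z x = ∫ u, Real.exp (gE (x, u)) ∂μ := fun x => rfl
  have hZlb : ∀ x, Real.exp (-M) * c ≤ Z x := by
    intro x
    have := integral_mono (μ := μ) (integrable_const (Real.exp (-M))) (hintexp x)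
      (fun u => hexpge (x, u))
    rw [hZeq x]
    calc Real.exp (-M) * c = ∫ _, Real.exp (-M) ∂μ := by
          rw [integral_const, smul_eq_mul, hcdef, mul_comm]; rfl
      _ ≤ _ := this
  have hZpos : ∀ x, 0 < Z x := fun x =>
    lt_of_lt_of_le (mul_pos (Real.exp_pos _) hc) (hZlb x)
  have hZmeas : Measurable Z := by
    rw [hZdef]
    exact ((Real.measurable_exp.comp hgEmeas).stronglyMeasurable.integral_prod_right').measurable
  -- basic properties of πstar
  have hπmeas : Measurable πstar := by
    rw [hπ]
    exact (Real.measurable_exp.comp hgEmeas).div (hZmeas.comp measurable_fst)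
  have hπcomp : ∀ x : 𝒳, Measurable fun u => πstar (x, u) := fun x =>
    hπmeas.comp measurable_prodMk_left
  have hπnonneg : ∀ p, 0 ≤ πstar p := by
    intro p; rw [hπ]
    exact div_nonneg (Real.exp_pos _).le (hZpos _).le
  set Cπ : ℝ := Real.exp M / (Real.exp (-M) * c) with hCπdef
  have hπle : ∀ p, πstar p ≤ Cπ := by
    intro p; rw [hπ, hCπdef]
    exact div_le_div₀ (Real.exp_pos M).le (hexple p) (mul_pos (Real.exp_pos _) hc) (hZlb p.1)
  have hπint : ∀ x, Integrable (fun u => πstar (x, u)) μ := fun x =>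
    integrable_of_bdd' (hπcomp x) Cπ
      (fun u => by rw [abs_of_nonneg (hπnonneg _)]; exact hπle _)
  have hπint1 : ∀ x, ∫ u, πstar (x, u) ∂μ = 1 := by
    intro x
    rw [hπ]
    simp only
    rw [integral_div, ← hZeq x, div_self (hZpos x).ne']
  have hlogπ : ∀ p, Real.log (πstar p) = gE p - Real.log (Z p.1) := by
    intro p
    rw [hπ]
    simp only
    rw [Real.log_div (Real.exp_ne_zero _) (hZpos _).ne', Real.log_exp]
  -- key computation of Tpol πstar W
  have hkey : ∀ (W : 𝒳 → ℝ), Measurable W → ∀ CW : ℝ, (∀ x, |W x| ≤ CW) → ∀ x,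
      Tpol μ κ r h lam γ πstar W x =
        lam * h * Real.log (Z x) +
          γ * ∫ u, ((∫ y, W y ∂(κ (x, u))) - (∫ y, Vh y ∂(κ (x, u)))) * πstar (x, u) ∂μ := by
    intro W hWmeas CW hCW x
    have hIWmeas : Measurable fun p : 𝒳 × 𝒰 => ∫ y, W y ∂(κ p) :=
      ((hWmeas.stronglyMeasurable.comp_measurable measurable_snd).integral_kernel_prod_right').measurable
    have hIWbdd : ∀ p : 𝒳 × 𝒰, |∫ y, W y ∂(κ p)| ≤ CW := fun p =>
      abs_integral_le_of_prob (κ p) hCW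
    have hptwise : ∀ u,
        (r (x, u) * h - lam * h * Real.log (πstar (x, u)) + γ * ∫ y, W y ∂(κ (x, u)))
            * πstar (x, u)
          = lam * h * Real.log (Z x) * πstar (x, u) +
            γ * (((∫ y, W y ∂(κ (x, u))) - (∫ y, Vh y ∂(κ (x, u)))) * πstar (x, u)) := by
      intro u
      have h1 : gE (x, u) * (lam * h) = r (x, u) * h + γ * ∫ y, Vh y ∂(κ (x, u)) :=
        div_mul_cancel₀ _ hlh.ne'
      rw [hlogπ (x, u)]
      linear_combination (-(πstar (x, u))) * h1
    rw [show Tpol μ κ r h lam γ πstar W x = ∫ u,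
        (r (x, u) * h - lam * h * Real.log (πstar (x, u)) + γ * ∫ y, W y ∂(κ (x, u)))
          * πstar (x, u) ∂μ from rfl]
    rw [integral_congr_ae (ae_of_all _ hptwise)]
    have hint1 : Integrable (fun u => lam * h * Real.log (Z x) * πstar (x, u)) μ :=
      (hπint x).const_mul _
    have hint2 : Integrable
        (fun u => γ * (((∫ y, W y ∂(κ (x, u))) - (∫ y, Vh y ∂(κ (x, u)))) * πstar (x, u))) μ := by
      apply Integrable.const_mul
      have hm : Measurable fun u =>
          ((∫ y, W y ∂(κ (x, u))) - (∫ y, Vh y ∂(κ (x, u)))) * πstar (x, u) :=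
        ((hIWmeas.comp measurable_prodMk_left).sub
          (hIVmeas.comp measurable_prodMk_left)).mul (hπcomp x)
      apply integrable_of_bdd' hm ((CW + CV) * Cπ)
      intro u
      rw [abs_mul]
      have h₁ : |(∫ y, W y ∂(κ (x, u))) - (∫ y, Vh y ∂(κ (x, u)))| ≤ CW + CV :=
        (abs_sub _ _).trans (add_le_add (hIWbdd _) (hIVbdd _))
      exact mul_le_mul h₁ (by rw [abs_of_nonneg (hπnonneg _)]; exact hπle _)
        (abs_nonneg _) ((abs_nonneg _).trans h₁)
    rw [integral_add hint1 hint2, integral_const_mul, integral_const_mul, hπint1 x, mul_one]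
  -- Tpol πstar Vh = Vh
  have hTVh : Tpol μ κ r h lam γ πstar Vh = Vh := by
    funext x
    rw [hkey Vh hVhmeas CV hCV x]
    simp only [sub_self, zero_mul, integral_zero, mul_zero, add_zero]
    have : Tstar μ κ r h lam γ Vh x = lam * h * Real.log (Z x) := rfl
    rw [← this, hVhfix]
  refine ⟨⟨hπmeas, ⟨Cπ, hπle⟩, hπnonneg, hπint1⟩, hTVh, ?_⟩
  -- uniqueness
  intro W hWmeas ⟨CW₀, hCW₀⟩ hWfix
  set CW : ℝ := max CW₀ 0 with hCWdef
  have hCW : ∀ x, |W x| ≤ CW := fun x => (hCW₀ x).trans (le_max_left _ _)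
  set D : ℝ := CW + CV with hDdef
  have hIWmeas : Measurable fun p : 𝒳 × 𝒰 => ∫ y, W y ∂(κ p) :=
    ((hWmeas.stronglyMeasurable.comp_measurable measurable_snd).integral_kernel_prod_right').measurable
  have hDbd : ∀ x, |W x - Vh x| ≤ D := fun x =>
    (abs_sub _ _).trans (add_le_add (hCW x) (hCV x))
  have hgeom : ∀ n : ℕ, ∀ x, |W x - Vh x| ≤ γ ^ n * D := by
    intro n
    induction n with
    | zero => intro x; simpa using hDbd x
    | succ n ih =>
      intro x
      have hdiff : W x - Vh x =
          γ * ∫ u, ((∫ y, W y ∂(κ (x, u))) - (∫ y, Vh y ∂(κ (x, u)))) * πstar (x, u) ∂μ := by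
        conv_lhs => rw [← hWfix, ← hTVh]
        rw [hkey W hWmeas CW hCW x, hkey Vh hVhmeas CV hCV x]
        simp only [sub_self, zero_mul, integral_zero, mul_zero, add_zero]
        ring
      have hfbdd : ∀ u, |((∫ y, W y ∂(κ (x, u))) - (∫ y, Vh y ∂(κ (x, u)))) * πstar (x, u)|
          ≤ γ ^ n * D * πstar (x, u) := by
        intro u
        rw [abs_mul, abs_of_nonneg (hπnonneg _)]
        apply mul_le_mul_of_nonneg_right ?_ (hπnonneg _)
        have : ∫ y, W y ∂(κ (x, u)) - ∫ y, Vh y ∂(κ (x, u)) = ∫ y, (W y - Vh y) ∂(κ (x, u)) := by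
          rw [integral_sub (integrable_of_bdd' hWmeas CW hCW)
            (integrable_of_bdd' hVhmeas CV hCV)]
        rw [this]
        exact abs_integral_le_of_prob (κ (x, u)) (fun y => ih y)
      have hintf : Integrable
          (fun u => ((∫ y, W y ∂(κ (x, u))) - (∫ y, Vh y ∂(κ (x, u)))) * πstar (x, u)) μ := by
        have hm : Measurable fun u =>
            ((∫ y, W y ∂(κ (x, u))) - (∫ y, Vh y ∂(κ (x, u)))) * πstar (x, u) :=
          ((hIWmeas.comp measurable_prodMk_left).sub
            (hIVmeas.comp measurable_prodMk_left)).mul (hπcomp x)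
        apply integrable_of_bdd' hm (D * Cπ)
        intro u
        rw [abs_mul]
        have h₁ : |(∫ y, W y ∂(κ (x, u))) - (∫ y, Vh y ∂(κ (x, u)))| ≤ D :=
          (abs_sub _ _).trans (add_le_add
            (abs_integral_le_of_prob (κ (x, u)) hCW) (hIVbdd _))
        exact mul_le_mul h₁ (by rw [abs_of_nonneg (hπnonneg _)]; exact hπle _)
          (abs_nonneg _) ((abs_nonneg _).trans h₁)
      have hintbd : |∫ u, ((∫ y, W y ∂(κ (x, u))) - (∫ y, Vh y ∂(κ (x, u)))) * πstar (x, u) ∂μ|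
          ≤ γ ^ n * D := by
        calc |∫ u, ((∫ y, W y ∂(κ (x, u))) - (∫ y, Vh y ∂(κ (x, u)))) * πstar (x, u) ∂μ|
            ≤ ∫ u, |((∫ y, W y ∂(κ (x, u))) - (∫ y, Vh y ∂(κ (x, u)))) * πstar (x, u)| ∂μ :=
              by
                simpa only [Real.norm_eq_abs] using norm_integral_le_integral_norm (μ := μ)
                  (fun u => ((∫ y, W y ∂(κ (x, u))) - (∫ y, Vh y ∂(κ (x, u)))) * πstar (x, u))
          _ ≤ ∫ u, γ ^ n * D * πstar (x, u) ∂μ :=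
              integral_mono hintf.abs ((hπint x).const_mul _) hfbdd
          _ = γ ^ n * D := by rw [integral_const_mul, hπint1 x, mul_one]
      rw [hdiff, abs_mul, abs_of_pos hγ0]
      calc γ * |∫ u, ((∫ y, W y ∂(κ (x, u))) - (∫ y, Vh y ∂(κ (x, u)))) * πstar (x, u) ∂μ|
          ≤ γ * (γ ^ n * D) := mul_le_mul_of_nonneg_left hintbd hγ0.le
        _ = γ ^ (n + 1) * D := by ring
  funext x
  have ht : Filter.Tendsto (fun n : ℕ => γ ^ n * D) Filter.atTop (nhds 0) := by
    simpa using (tendsto_pow_atTop_nhds_zero_of_lt_one hγ0.le hγ1).mul_const D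
  have hle : |W x - Vh x| ≤ 0 := ge_of_tendsto' ht (fun n => hgeom n x)
  have := abs_nonpos_iff.mp hle
  linarith [sub_eq_zero.mp this, this]
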